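/- The set of inclusion-free M-cliques of arity n ≥ 2 is in bijection with the set of Dyck paths of size n+1 in which each letter 'a' occurring at an even position is colored by a non-unit element of M; moreover this bijection sends cliques with exactly k solid arcs to paths with exactly k letters 'a' at even positions. -/

import Mathlib

/-- The set of arcs `(x, y)`, `x < y`, of a complete graph on `n + 1` vertices. -/
def Arc (n : ℕ) : Type := {a : Fin (n + 1) × Fin (n + 1) // a.1 < a.2}

/-- An `M`-clique is inclusion-free if whenever a solid arc includes a solid arc
(arc `(x, y)` includes arc `(x', y')` when `x ≤ x' < y' ≤ y`), the two arcs are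
equal.  An arc is solid if its label is different from the unit of `M`. -/
def InclusionFree {M : Type} [One M] {n : ℕ} (p : Arc n → M) : Prop :=
  ∀ a b : Arc n, p a ≠ 1 → p b ≠ 1 →
    a.val.1 ≤ b.val.1 → b.val.2 ≤ a.val.2 → a = b

/-- A Dyck path of size `n + 1` (a word of length `2(n+1)` over `{a, b}`, with
`true` encoding the letter `a` and `false` the letter `b`, having as many `a`'s
as `b`'s and every prefix containing at least as many `a`'s as `b`'s) in which
every letter `a` occurring at an even position (positions being numbered from
`1`, so even positions are the indices `i` with `i % 2 = 1` in the `0`-indexed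
encoding) is colored by a non-unit element of `M`. -/
structure ColoredDyck (M : Type) [One M] (n : ℕ) where
  w : Fin (2 * (n + 1)) → Bool
  balanced : (Finset.univ.filter (fun i => w i = true)).card = n + 1
  prefixCond : ∀ j : ℕ,
    (Finset.univ.filter (fun i : Fin (2 * (n + 1)) => (i : ℕ) < j ∧ w i = false)).card ≤
      (Finset.univ.filter (fun i : Fin (2 * (n + 1)) => (i : ℕ) < j ∧ w i = true)).card
  color : ∀ i : Fin (2 * (n + 1)), w i = true → (i : ℕ) % 2 = 1 → {x : M // x ≠ 1}

open Finset

namespace IFCD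

open scoped Classical

variable {n : ℕ}

def oddIdx (m : Fin (n + 1)) : Fin (2 * (n + 1)) := ⟨2 * m + 1, by omega⟩
def evenIdx (m : Fin (n + 1)) : Fin (2 * (n + 1)) := ⟨2 * m, by omega⟩

noncomputable def wordOf (L R : Finset (Fin (n + 1))) : Fin (2 * (n + 1)) → Bool :=
  fun i => if (i : ℕ) % 2 = 1 then
      decide ((⟨(i : ℕ) / 2, by have := i.isLt; omega⟩ : Fin (n + 1)) ∈ L)
    else decide ((⟨(i : ℕ) / 2, by have := i.isLt; omega⟩ : Fin (n + 1)) ∉ R)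

lemma wordOf_odd (L R : Finset (Fin (n + 1))) (m : Fin (n + 1)) :
    wordOf L R (oddIdx m) = decide (m ∈ L) := by
  have h1 : ((oddIdx m : Fin (2 * (n + 1))) : ℕ) % 2 = 1 := by
    simp only [oddIdx]; omega
  have h2 : (⟨((oddIdx m : Fin (2 * (n + 1))) : ℕ) / 2, by omega⟩ : Fin (n+1)) = m := by
    apply Fin.ext; simp only [oddIdx]; omega
  simp only [wordOf, h1, if_true, h2]

lemma wordOf_even (L R : Finset (Fin (n + 1))) (m : Fin (n + 1)) :
    wordOf L R (evenIdx m) = decide (m ∉ R) := by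
  have h1 : ¬ ((evenIdx m : Fin (2 * (n + 1))) : ℕ) % 2 = 1 := by
    simp only [evenIdx]; omega
  have h2 : (⟨((evenIdx m : Fin (2 * (n + 1))) : ℕ) / 2, by omega⟩ : Fin (n+1)) = m := by
    apply Fin.ext; simp only [evenIdx]; omega
  simp only [wordOf, h1, if_false, h2]

noncomputable def cntW (w : Fin (2 * (n + 1)) → Bool) (b : Bool) (j : ℕ) : ℕ :=
  (univ.filter fun i : Fin (2 * (n + 1)) => (i : ℕ) < j ∧ w i = b).card

noncomputable def cntS (S : Finset (Fin (n + 1))) (m : ℕ) : ℕ :=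
  (univ.filter fun x : Fin (n + 1) => (x : ℕ) < m ∧ x ∈ S).card

lemma filter_lt_succ {K : ℕ} (P : Fin K → Prop) [DecidablePred P] (j : ℕ) :
    (univ.filter fun i : Fin K => (i : ℕ) < j + 1 ∧ P i).card =
    (univ.filter fun i : Fin K => (i : ℕ) < j ∧ P i).card +
      (if h : j < K then (if P ⟨j, h⟩ then 1 else 0) else 0) := by
  by_cases hj : j < K
  · by_cases hP : P ⟨j, hj⟩
    · rw [dif_pos hj, if_pos hP]
      have he : (univ.filter fun i : Fin K => (i : ℕ) < j + 1 ∧ P i)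
          = insert ⟨j, hj⟩ (univ.filter fun i : Fin K => (i : ℕ) < j ∧ P i) := by
        ext i
        simp only [mem_filter, mem_univ, true_and, mem_insert]
        constructor
        · rintro ⟨h1, h2⟩
          rcases Nat.lt_succ_iff_lt_or_eq.1 h1 with h | h
          · exact Or.inr ⟨h, h2⟩
          · exact Or.inl (Fin.ext h)
        · rintro (rfl | ⟨h1, h2⟩)
          · exact ⟨Nat.lt_succ_self _, hP⟩
          · exact ⟨Nat.lt_succ_of_lt h1, h2⟩
      rw [he, card_insert_of_notMem (by simp)]
    · rw [dif_pos hj, if_neg hP, add_zero]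
      congr 1
      ext i
      simp only [mem_filter, mem_univ, true_and, and_congr_left_iff]
      intro h2
      constructor
      · intro h1
        rcases Nat.lt_succ_iff_lt_or_eq.1 h1 with h | h
        · exact h
        · exact absurd h2 (by cases (Fin.ext h : i = ⟨j, hj⟩); exact hP)
      · exact Nat.lt_succ_of_lt
  · rw [dif_neg hj, add_zero]
    congr 1
    ext i
    simp only [mem_filter, mem_univ, true_and, and_congr_left_iff]
    intro _
    have := i.isLt
    omega

lemma filter_lt_of_ge {K : ℕ} (P : Fin K → Prop) [DecidablePred P] {j : ℕ} (hj : K ≤ j) :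
    (univ.filter fun i : Fin K => (i : ℕ) < j ∧ P i) = univ.filter P := by
  ext i
  have := i.isLt
  simp only [mem_filter, mem_univ, true_and, and_iff_right_iff_imp]
  intro _
  omega

lemma cntS_zero (S : Finset (Fin (n + 1))) : cntS S 0 = 0 := by
  simp [cntS]

lemma cntS_succ (S : Finset (Fin (n + 1))) (m : ℕ) :
    cntS S (m + 1) = cntS S m +
      (if h : m < n + 1 then (if (⟨m, h⟩ : Fin (n + 1)) ∈ S then 1 else 0) else 0) :=
  filter_lt_succ _ m

lemma cntS_mono (S : Finset (Fin (n + 1))) {m m' : ℕ} (h : m ≤ m') : cntS S m ≤ cntS S m' := by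
  apply card_le_card
  intro x
  simp only [mem_filter, mem_univ, true_and]
  rintro ⟨h1, h2⟩
  exact ⟨lt_of_lt_of_le h1 h, h2⟩

lemma cntS_of_ge (S : Finset (Fin (n + 1))) {m : ℕ} (h : n + 1 ≤ m) : cntS S m = S.card := by
  rw [cntS, filter_lt_of_ge _ h, filter_univ_mem]

lemma cntS_le (S : Finset (Fin (n + 1))) (m : ℕ) : cntS S m ≤ S.card := by
  rcases le_total m (n+1) with h | h
  · exact le_trans (cntS_mono S h) (le_of_eq (cntS_of_ge S le_rfl))
  · exact le_of_eq (cntS_of_ge S h)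


lemma cntW_zero (w : Fin (2 * (n + 1)) → Bool) (b : Bool) : cntW w b 0 = 0 := by
  simp [cntW]

lemma cntW_succ (w : Fin (2 * (n + 1)) → Bool) (b : Bool) (j : ℕ) :
    cntW w b (j + 1) = cntW w b j +
      (if h : j < 2 * (n + 1) then (if w ⟨j, h⟩ = b then 1 else 0) else 0) :=
  filter_lt_succ _ j

lemma cntW_of_ge (w : Fin (2 * (n + 1)) → Bool) (b : Bool) {j : ℕ} (h : 2 * (n + 1) ≤ j) :
    cntW w b j = cntW w b (2 * (n + 1)) := by
  rw [cntW, cntW, filter_lt_of_ge _ h, filter_lt_of_ge _ le_rfl]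

/-- The two key counting formulas for `wordOf L R`, at even prefixes. -/
lemma cnt_formula (L R : Finset (Fin (n + 1))) :
    ∀ m : ℕ, m ≤ n + 1 →
      cntW (wordOf L R) true (2 * m) + cntS R m = m + cntS L m ∧
      cntW (wordOf L R) false (2 * m) + cntS L m = m + cntS R m := by
  intro m
  induction m with
  | zero => simp [cntW_zero, cntS_zero]
  | succ m ih =>
    intro hm
    obtain ⟨h1, h2⟩ := ih (by omega)
    have hm' : m < n + 1 := by omega
    have hmm : (2 * m) < 2 * (n + 1) := by omega
    have hmm1 : (2 * m + 1) < 2 * (n + 1) := by omega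
    have heq : (⟨2 * m, hmm⟩ : Fin (2 * (n + 1))) = evenIdx ⟨m, hm'⟩ := rfl
    have heq1 : (⟨2 * m + 1, hmm1⟩ : Fin (2 * (n + 1))) = oddIdx ⟨m, hm'⟩ := rfl
    have e2 : 2 * (m + 1) = (2 * m + 1) + 1 := by ring
    rw [e2, cntW_succ, cntW_succ, cntW_succ, cntW_succ, cntS_succ, cntS_succ,
      dif_pos hm', dif_pos hmm, dif_pos hmm1, dif_pos hmm, dif_pos hmm1, dif_pos hm',
      heq, heq1, wordOf_even, wordOf_odd]
    by_cases hL : (⟨m, hm'⟩ : Fin (n + 1)) ∈ L <;>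
      by_cases hR : (⟨m, hm'⟩ : Fin (n + 1)) ∈ R <;>
      simp [hL, hR] <;> omega

/-- From the key inequality to the prefix condition. -/
lemma prefix_of_key (L R : Finset (Fin (n + 1)))
    (key : ∀ m : ℕ, cntS R (m + 1) ≤ cntS L m) :
    ∀ j : ℕ, cntW (wordOf L R) false j ≤ cntW (wordOf L R) true j := by
  have keyle : ∀ m : ℕ, cntS R m ≤ cntS L m := by
    intro m
    cases m with
    | zero => simp [cntS_zero]
    | succ m => exact le_trans (key m) (cntS_mono L (Nat.le_succ m))
  -- first handle even prefixes 2*m with m ≤ n+1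
  have heven : ∀ m : ℕ, m ≤ n + 1 →
      cntW (wordOf L R) false (2 * m) ≤ cntW (wordOf L R) true (2 * m) := by
    intro m hm
    obtain ⟨h1, h2⟩ := cnt_formula L R m hm
    have := keyle m
    omega
  intro j
  rcases le_or_gt (2 * (n + 1)) j with hj | hj
  · rw [cntW_of_ge _ _ hj, cntW_of_ge _ _ hj]
    have : 2 * (n + 1) = 2 * (n + 1) := rfl
    exact heven (n + 1) le_rfl
  · rcases Nat.even_or_odd j with ⟨m, hm⟩ | ⟨m, hm⟩
    · obtain rfl : j = 2 * m := by omega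
      exact heven m (by omega)
    · obtain rfl : j = 2 * m + 1 := by omega
      have hm' : m < n + 1 := by omega
      have hmm : (2 * m) < 2 * (n + 1) := by omega
      have heq : (⟨2 * m, hmm⟩ : Fin (2 * (n + 1))) = evenIdx ⟨m, hm'⟩ := rfl
      obtain ⟨h1, h2⟩ := cnt_formula L R m (by omega)
      rw [cntW_succ, cntW_succ, dif_pos hmm, dif_pos hmm, heq, wordOf_even]
      by_cases hR : (⟨m, hm'⟩ : Fin (n + 1)) ∈ R
      · -- letter is b; need strict room: cntS R (m+1) = cntS R m + 1 ≤ cntS L m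
        have hk := key m
        rw [cntS_succ, dif_pos hm', if_pos hR] at hk
        simp [hR]
        omega
      · have := keyle m
        simp [hR]
        omega

/-- From the prefix condition and balancedness, the key inequality. -/
lemma key_of_prefix (L R : Finset (Fin (n + 1)))
    (hbal : R.card = L.card)
    (hpre : ∀ j : ℕ, cntW (wordOf L R) false j ≤ cntW (wordOf L R) true j) :
    ∀ m : ℕ, cntS R (m + 1) ≤ cntS L m := by
  intro m
  rcases le_or_gt (n + 1) m with hm | hm
  · rw [cntS_of_ge R (by omega), cntS_of_ge L hm, hbal]
  · have hmm : (2 * m) < 2 * (n + 1) := by omega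
    have heq : (⟨2 * m, hmm⟩ : Fin (2 * (n + 1))) = evenIdx ⟨m, hm⟩ := rfl
    obtain ⟨h1, h2⟩ := cnt_formula L R m (by omega)
    have hp := hpre (2 * m + 1)
    rw [cntW_succ, cntW_succ, dif_pos hmm, dif_pos hmm, heq, wordOf_even] at hp
    rw [cntS_succ, dif_pos hm]
    by_cases hR : (⟨m, hm⟩ : Fin (n + 1)) ∈ R
    · simp only [hR, if_true]
      simp [hR] at hp
      omega
    · simp only [hR, if_false]
      simp [hR] at hp
      omega

/-- Balancedness in terms of the two endpoint sets. -/
lemma balanced_iff (L R : Finset (Fin (n + 1))) :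
    (univ.filter fun i => wordOf L R i = true).card = n + 1 ↔ R.card = L.card := by
  have h : (univ.filter fun i => wordOf L R i = true).card
      = cntW (wordOf L R) true (2 * (n + 1)) := by
    rw [cntW, filter_lt_of_ge _ le_rfl]
  obtain ⟨h1, _⟩ := cnt_formula L R (n + 1) le_rfl
  rw [cntS_of_ge R le_rfl, cntS_of_ge L le_rfl] at h1
  have hLle := card_le_univ L
  have hRle := card_le_univ R
  simp only [Finset.card_univ, Fintype.card_fin] at hLle hRle
  rw [h]
  omega

/-- counting letters `a` at even (1-indexed) positions. -/
lemma card_odd_true (L R : Finset (Fin (n + 1))) :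
    (univ.filter fun i : Fin (2 * (n + 1)) =>
      wordOf L R i = true ∧ (i : ℕ) % 2 = 1).card = L.card := by
  classical
  apply card_bij (fun (i : Fin (2 * (n + 1))) _ => (⟨(i : ℕ) / 2, by have := i.isLt; omega⟩ : Fin (n + 1)))
  · intro i hi
    simp only [mem_filter, mem_univ, true_and] at hi
    obtain ⟨hw, hodd⟩ := hi
    have hio : i = oddIdx ⟨(i : ℕ) / 2, by have := i.isLt; omega⟩ := by
      apply Fin.ext; simp only [oddIdx]; omega
    rw [hio, wordOf_odd] at hw
    simpa using hw
  · intro i hi i' hi' hh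
    simp only [mem_filter, mem_univ, true_and] at hi hi'
    have : (i : ℕ) / 2 = (i' : ℕ) / 2 := congrArg Fin.val hh
    apply Fin.ext
    omega
  · intro m hm
    refine ⟨oddIdx m, ?_, ?_⟩
    · simp only [mem_filter, mem_univ, true_and]
      constructor
      · rw [wordOf_odd]; simpa using hm
      · simp only [oddIdx]; omega
    · apply Fin.ext
      simp only [oddIdx]
      omega


/-! ### The clique side -/

variable {M : Type} [MulOneClass M]

noncomputable instance : Fintype (Arc n) := by unfold Arc; infer_instance

lemma Arc.lt (a : Arc n) : (a.val.1 : ℕ) < (a.val.2 : ℕ) := a.prop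

/-- The finset of solid arcs. -/
noncomputable def Sarcs (p : Arc n → M) : Finset (Arc n) := univ.filter fun a => p a ≠ 1

lemma mem_Sarcs {p : Arc n → M} {a : Arc n} : a ∈ Sarcs p ↔ p a ≠ 1 := by
  simp [Sarcs]

/-- Left endpoints of solid arcs. -/
noncomputable def Lp (p : Arc n → M) : Finset (Fin (n + 1)) :=
  (Sarcs p).image fun a => a.val.1

/-- Right endpoints of solid arcs. -/
noncomputable def Rp (p : Arc n → M) : Finset (Fin (n + 1)) :=
  (Sarcs p).image fun a => a.val.2

lemma mem_Lp {p : Arc n → M} {x : Fin (n + 1)} :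
    x ∈ Lp p ↔ ∃ a : Arc n, p a ≠ 1 ∧ a.val.1 = x := by
  simp only [Lp, mem_image, mem_Sarcs]

lemma mem_Rp {p : Arc n → M} {y : Fin (n + 1)} :
    y ∈ Rp p ↔ ∃ a : Arc n, p a ≠ 1 ∧ a.val.2 = y := by
  simp only [Rp, mem_image, mem_Sarcs]

section UniqueArcs

variable {p : Arc n → M} (hp : InclusionFree p)

include hp

lemma left_unique {a b : Arc n} (ha : p a ≠ 1) (hb : p b ≠ 1)
    (h : a.val.1 = b.val.1) : a = b := by
  rcases le_total a.val.2 b.val.2 with h2 | h2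
  · exact (hp b a hb ha h.ge h2).symm
  · exact hp a b ha hb h.le h2

lemma right_unique {a b : Arc n} (ha : p a ≠ 1) (hb : p b ≠ 1)
    (h : a.val.2 = b.val.2) : a = b := by
  rcases le_total a.val.1 b.val.1 with h1 | h1
  · exact hp a b ha hb h1 h.ge
  · exact (hp b a hb ha h1 h.le).symm

lemma right_mono {a b : Arc n} (ha : p a ≠ 1) (hb : p b ≠ 1)
    (h : a.val.1 < b.val.1) : a.val.2 < b.val.2 := by
  rcases lt_or_ge a.val.2 b.val.2 with h2 | h2
  · exact h2
  · have heq := hp a b ha hb h.le h2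
    rw [heq] at h
    exact absurd h (lt_irrefl _)

lemma card_Lp : (Lp p).card = (Sarcs p).card :=
  card_image_of_injOn fun a ha b hb h =>
    left_unique hp (mem_Sarcs.1 ha) (mem_Sarcs.1 hb) h

lemma card_Rp : (Rp p).card = (Sarcs p).card :=
  card_image_of_injOn fun a ha b hb h =>
    right_unique hp (mem_Sarcs.1 ha) (mem_Sarcs.1 hb) h

lemma cardRL : (Rp p).card = (Lp p).card := by rw [card_Rp hp, card_Lp hp]

lemma keyF : ∀ m : ℕ, cntS (Rp p) (m + 1) ≤ cntS (Lp p) m := by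
  intro m
  classical
  set T : Finset (Arc n) := (Sarcs p).filter (fun a => (a.val.2 : ℕ) < m + 1) with hT
  have h1 : (univ.filter fun y : Fin (n + 1) => (y : ℕ) < m + 1 ∧ y ∈ Rp p)
      = T.image (fun a => a.val.2) := by
    ext y
    simp only [mem_filter, mem_univ, true_and, mem_image, hT, mem_Rp]
    constructor
    · rintro ⟨hy, a, ha, rfl⟩
      exact ⟨a, ⟨mem_Sarcs.2 ha, hy⟩, rfl⟩
    · rintro ⟨a, ⟨ha, hy⟩, rfl⟩
      exact ⟨hy, a, mem_Sarcs.1 ha, rfl⟩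
  have h2 : T.image (fun a => a.val.1)
      ⊆ (univ.filter fun x : Fin (n + 1) => (x : ℕ) < m ∧ x ∈ Lp p) := by
    intro x hx
    simp only [mem_image, hT, mem_filter] at hx
    obtain ⟨a, ⟨ha, hy⟩, rfl⟩ := hx
    simp only [mem_filter, mem_univ, true_and]
    refine ⟨?_, mem_Lp.2 ⟨a, mem_Sarcs.1 ha, rfl⟩⟩
    have := Arc.lt a
    omega
  have hc1 : (T.image (fun a => a.val.2)).card = T.card :=
    card_image_of_injOn fun a ha b hb h =>
      right_unique hp (mem_Sarcs.1 (mem_filter.1 ha).1) (mem_Sarcs.1 (mem_filter.1 hb).1) h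
  have hc2 : (T.image (fun a => a.val.1)).card = T.card :=
    card_image_of_injOn fun a ha b hb h =>
      left_unique hp (mem_Sarcs.1 (mem_filter.1 ha).1) (mem_Sarcs.1 (mem_filter.1 hb).1) h
  calc cntS (Rp p) (m + 1) = T.card := by rw [cntS, h1, hc1]
    _ = (T.image (fun a => a.val.1)).card := hc2.symm
    _ ≤ _ := card_le_card h2

end UniqueArcs

/-- The unique solid arc with a given left endpoint. -/
noncomputable def solidAtL (p : Arc n → M) (x : Fin (n + 1))
    (h : ∃ a : Arc n, p a ≠ 1 ∧ a.val.1 = x) : Arc n := h.choose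

lemma solidAtL_spec (p : Arc n → M) (x : Fin (n + 1))
    (h : ∃ a : Arc n, p a ≠ 1 ∧ a.val.1 = x) :
    p (solidAtL p x h) ≠ 1 ∧ (solidAtL p x h).val.1 = x := h.choose_spec

/-- The forward map: from an inclusion-free clique to a colored Dyck path. -/
noncomputable def F (p : Arc n → M) (hp : InclusionFree p) : ColoredDyck M n where
  w := wordOf (Lp p) (Rp p)
  balanced := (balanced_iff _ _).2 (cardRL hp)
  prefixCond := fun j => prefix_of_key _ _ (keyF hp) j
  color := fun i hw hodd =>
    have hx : ∃ a : Arc n, p a ≠ 1 ∧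
        a.val.1 = (⟨(i : ℕ) / 2, by have := i.isLt; omega⟩ : Fin (n + 1)) := by
      have hio : i = oddIdx ⟨(i : ℕ) / 2, by have := i.isLt; omega⟩ := by
        apply Fin.ext; simp only [oddIdx]; omega
      rw [hio, wordOf_odd, decide_eq_true_eq] at hw
      exact mem_Lp.1 hw
    ⟨p (solidAtL p _ hx), (solidAtL_spec p _ hx).1⟩

/-! ### The Dyck path side -/

/-- Left endpoint set encoded by a colored Dyck path. -/
noncomputable def Ld (d : ColoredDyck M n) : Finset (Fin (n + 1)) :=
  univ.filter fun m => d.w (oddIdx m) = true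

/-- Right endpoint set encoded by a colored Dyck path. -/
noncomputable def Rd (d : ColoredDyck M n) : Finset (Fin (n + 1)) :=
  univ.filter fun m => d.w (evenIdx m) = false

lemma wEq (d : ColoredDyck M n) : d.w = wordOf (Ld d) (Rd d) := by
  funext i
  by_cases hodd : (i : ℕ) % 2 = 1
  · have hio : i = oddIdx ⟨(i : ℕ) / 2, by have := i.isLt; omega⟩ := by
      apply Fin.ext; simp only [oddIdx]; omega
    rw [hio, wordOf_odd]
    simp only [Ld, mem_filter, mem_univ, true_and]
    cases h : d.w (oddIdx ⟨(i : ℕ) / 2, by have := i.isLt; omega⟩) <;> simp [h]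
  · have hio : i = evenIdx ⟨(i : ℕ) / 2, by have := i.isLt; omega⟩ := by
      apply Fin.ext; simp only [evenIdx]; omega
    rw [hio, wordOf_even]
    simp only [Rd, mem_filter, mem_univ, true_and]
    cases h : d.w (evenIdx ⟨(i : ℕ) / 2, by have := i.isLt; omega⟩) <;> simp [h]

lemma cardRLd (d : ColoredDyck M n) : (Rd d).card = (Ld d).card := by
  apply (balanced_iff (Ld d) (Rd d)).1
  rw [show wordOf (Ld d) (Rd d) = d.w from (wEq d).symm]
  exact d.balanced

lemma keyB (d : ColoredDyck M n) : ∀ m : ℕ, cntS (Rd d) (m + 1) ≤ cntS (Ld d) m := by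
  apply key_of_prefix _ _ (cardRLd d)
  intro j
  show cntW (wordOf (Ld d) (Rd d)) false j ≤ cntW (wordOf (Ld d) (Rd d)) true j
  rw [cntW, cntW, show wordOf (Ld d) (Rd d) = d.w from (wEq d).symm]
  exact d.prefixCond j

/-- If a finset has at least `t + 1` elements below `y`, then its `t`-th element is `< y`. -/
lemma lt_of_cnt {s : Finset (Fin (n + 1))} {k : ℕ} (h : s.card = k) (t : Fin k)
    {y : Fin (n + 1)} (hy : (t : ℕ) + 1 ≤ cntS s (y : ℕ)) : s.orderEmbOfFin h t < y := by
  by_contra hc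
  push_neg at hc
  have hsub : (univ.filter fun x : Fin (n + 1) => (x : ℕ) < (y : ℕ) ∧ x ∈ s)
      ⊆ (univ.filter fun u : Fin k => u < t).image (s.orderEmbOfFin h) := by
    intro x hx
    simp only [mem_filter, mem_univ, true_and] at hx
    obtain ⟨hxy, hxs⟩ := hx
    obtain ⟨u, hu⟩ : ∃ u, s.orderEmbOfFin h u = x := by
      have : x ∈ Set.range (s.orderEmbOfFin h) := by
        rw [range_orderEmbOfFin]; exact hxs
      exact this
    rw [mem_image]
    refine ⟨u, ?_, hu⟩
    simp only [mem_filter, mem_univ, true_and]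
    by_contra hut
    push_neg at hut
    have h1 : s.orderEmbOfFin h t ≤ s.orderEmbOfFin h u := (s.orderEmbOfFin h).monotone hut
    rw [hu] at h1
    have h2 : (y : ℕ) ≤ (x : ℕ) := Fin.le_def.1 (le_trans hc h1)
    omega
  have hcard := card_le_card hsub
  rw [card_image_of_injective _ (s.orderEmbOfFin h).injective] at hcard
  have hIio : (univ.filter fun u : Fin k => u < t).card = (t : ℕ) := by
    rw [show (univ.filter fun u : Fin k => u < t) = Finset.Iio t by ext u; simp,
      Fin.card_Iio]
  rw [hIio] at hcard
  rw [cntS] at hy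
  omega

/-- The `t`-th left endpoint. -/
noncomputable def xs (d : ColoredDyck M n) : Fin (Ld d).card ↪o Fin (n + 1) :=
  (Ld d).orderEmbOfFin rfl

/-- The `t`-th right endpoint. -/
noncomputable def ys (d : ColoredDyck M n) : Fin (Ld d).card ↪o Fin (n + 1) :=
  (Rd d).orderEmbOfFin (cardRLd d)

lemma xs_mem (d : ColoredDyck M n) (t : Fin (Ld d).card) : xs d t ∈ Ld d :=
  orderEmbOfFin_mem _ _ _

lemma ys_mem (d : ColoredDyck M n) (t : Fin (Ld d).card) : ys d t ∈ Rd d :=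
  orderEmbOfFin_mem _ _ _

lemma xs_lt_ys (d : ColoredDyck M n) (t : Fin (Ld d).card) : xs d t < ys d t := by
  have hy : (t : ℕ) + 1 ≤ cntS (Rd d) ((ys d t : ℕ) + 1) := by
    have hsub : (univ.filter fun u : Fin (Ld d).card => u ≤ t).image (ys d)
        ⊆ univ.filter fun x : Fin (n + 1) => (x : ℕ) < (ys d t : ℕ) + 1 ∧ x ∈ Rd d := by
      intro x hx
      rw [mem_image] at hx
      obtain ⟨u, hu, rfl⟩ := hx
      simp only [mem_filter, mem_univ, true_and] at hu ⊢
      refine ⟨?_, ys_mem d u⟩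
      have := Fin.le_def.1 ((ys d).monotone hu)
      omega
    have hcard := card_le_card hsub
    rw [card_image_of_injective _ (ys d).injective] at hcard
    have hIic : (univ.filter fun u : Fin (Ld d).card => u ≤ t).card = (t : ℕ) + 1 := by
      rw [show (univ.filter fun u : Fin (Ld d).card => u ≤ t) = Finset.Iic t by ext u; simp,
        Fin.card_Iic]
    rw [hIic] at hcard
    exact le_trans hcard (le_of_eq rfl)
  have := lt_of_cnt rfl t (le_trans hy (keyB d (ys d t : ℕ)))
  exact this

/-- The `t`-th matched arc of a colored Dyck path. -/
noncomputable def parc (d : ColoredDyck M n) (t : Fin (Ld d).card) : Arc n :=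
  ⟨(xs d t, ys d t), xs_lt_ys d t⟩

lemma parc_injective (d : ColoredDyck M n) : Function.Injective (parc d) := by
  intro s t h
  have : xs d s = xs d t := congrArg (fun a : Arc n => a.val.1) h
  exact (xs d).injective this

lemma parc_oddIdx_w (d : ColoredDyck M n) (t : Fin (Ld d).card) :
    d.w (oddIdx (xs d t)) = true := by
  have := xs_mem d t
  simp only [Ld, mem_filter, mem_univ, true_and] at this
  exact this

/-- The backward map: the clique function associated to a colored Dyck path. -/
noncomputable def Gfun (d : ColoredDyck M n) : Arc n → M := fun a =>
  if h : ∃ t : Fin (Ld d).card, a = parc d t then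
    (d.color (oddIdx (xs d h.choose)) (parc_oddIdx_w d h.choose) (by simp [oddIdx])).val
  else 1

lemma Gfun_solid_iff (d : ColoredDyck M n) (a : Arc n) :
    Gfun d a ≠ 1 ↔ ∃ t : Fin (Ld d).card, a = parc d t := by
  constructor
  · intro hne
    by_contra hc
    rw [Gfun, dif_neg hc] at hne
    exact hne rfl
  · intro h
    rw [Gfun, dif_pos h]
    exact (d.color _ _ _).prop

lemma Gfun_inclusionFree (d : ColoredDyck M n) : InclusionFree (Gfun d) := by
  intro a b ha hb h1 h2
  obtain ⟨s, rfl⟩ := (Gfun_solid_iff d a).1 ha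
  obtain ⟨t, rfl⟩ := (Gfun_solid_iff d b).1 hb
  have hst : s ≤ t := (xs d).le_iff_le.1 h1
  have hts : t ≤ s := (ys d).le_iff_le.1 h2
  rw [le_antisymm hst hts]

/-! ### Round trips -/

lemma color_congr (d : ColoredDyck M n) {i i' : Fin (2 * (n + 1))} (hii : i = i')
    (h1 : d.w i = true) (h2 : (i : ℕ) % 2 = 1)
    (h1' : d.w i' = true) (h2' : (i' : ℕ) % 2 = 1) :
    (d.color i h1 h2).val = (d.color i' h1' h2').val := by cases hii; rfl

lemma solidAtL_congr (p : Arc n → M) {x x' : Fin (n + 1)} (hxx : x = x')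
    (h : ∃ a : Arc n, p a ≠ 1 ∧ a.val.1 = x) (h' : ∃ a : Arc n, p a ≠ 1 ∧ a.val.1 = x') :
    solidAtL p x h = solidAtL p x' h' := by cases hxx; rfl

lemma Gfun_parc (d : ColoredDyck M n) (t : Fin (Ld d).card) :
    Gfun d (parc d t) =
      (d.color (oddIdx (xs d t)) (parc_oddIdx_w d t) (by simp [oddIdx])).val := by
  rw [Gfun, dif_pos ⟨t, rfl⟩]
  have hch : (⟨t, rfl⟩ : ∃ t', parc d t = parc d t').choose = t :=
    (parc_injective d (⟨t, rfl⟩ : ∃ t', parc d t = parc d t').choose_spec).symm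
  exact color_congr d (by rw [hch]) _ _ _ _

lemma F_color_val (p : Arc n → M) (hp : InclusionFree p) (i : Fin (2 * (n + 1)))
    (hw : (F p hp).w i = true) (hodd : (i : ℕ) % 2 = 1)
    (h : ∃ a : Arc n, p a ≠ 1 ∧
      a.val.1 = (⟨(i : ℕ) / 2, by have := i.isLt; omega⟩ : Fin (n + 1))) :
    ((F p hp).color i hw hodd).val = p (solidAtL p _ h) := rfl

lemma LdF (p : Arc n → M) (hp : InclusionFree p) : Ld (F p hp) = Lp p := by
  ext m
  simp only [Ld, mem_filter, mem_univ, true_and]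
  show wordOf (Lp p) (Rp p) (oddIdx m) = true ↔ m ∈ Lp p
  rw [wordOf_odd]
  simp

lemma RdF (p : Arc n → M) (hp : InclusionFree p) : Rd (F p hp) = Rp p := by
  ext m
  simp only [Rd, mem_filter, mem_univ, true_and]
  show wordOf (Lp p) (Rp p) (evenIdx m) = false ↔ m ∈ Rp p
  rw [wordOf_even]
  simp

lemma hxF (p : Arc n → M) (hp : InclusionFree p) (t : Fin (Ld (F p hp)).card) :
    ∃ a : Arc n, p a ≠ 1 ∧ a.val.1 = xs (F p hp) t :=
  mem_Lp.1 (LdF p hp ▸ xs_mem (F p hp) t)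

lemma ysF (p : Arc n → M) (hp : InclusionFree p) (t : Fin (Ld (F p hp)).card) :
    (solidAtL p (xs (F p hp) t) (hxF p hp t)).val.2 = ys (F p hp) t := by
  have hmono : StrictMono (fun t : Fin (Ld (F p hp)).card =>
      (solidAtL p (xs (F p hp) t) (hxF p hp t)).val.2) := by
    intro s t hst
    have h1 := solidAtL_spec p _ (hxF p hp s)
    have h2 := solidAtL_spec p _ (hxF p hp t)
    apply right_mono hp h1.1 h2.1
    rw [h1.2, h2.2]
    exact (xs (F p hp)).strictMono hst
  have hmem : ∀ t : Fin (Ld (F p hp)).card,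
      (solidAtL p (xs (F p hp) t) (hxF p hp t)).val.2 ∈ Rd (F p hp) := by
    intro t
    rw [RdF p hp]
    exact mem_Rp.2 ⟨_, (solidAtL_spec p _ (hxF p hp t)).1, rfl⟩
  exact congrFun (orderEmbOfFin_unique (cardRLd (F p hp)) hmem hmono) t

lemma solidAtL_eq_parc (p : Arc n → M) (hp : InclusionFree p) (t : Fin (Ld (F p hp)).card) :
    solidAtL p (xs (F p hp) t) (hxF p hp t) = parc (F p hp) t := by
  apply Subtype.ext
  apply Prod.ext
  · exact (solidAtL_spec p _ (hxF p hp t)).2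
  · exact ysF p hp t

lemma F_arcs (p : Arc n → M) (hp : InclusionFree p) (a : Arc n) :
    p a ≠ 1 ↔ ∃ t : Fin (Ld (F p hp)).card, a = parc (F p hp) t := by
  constructor
  · intro ha
    have hx : a.val.1 ∈ Ld (F p hp) := by
      rw [LdF p hp]
      exact mem_Lp.2 ⟨a, ha, rfl⟩
    obtain ⟨t, ht⟩ : ∃ t, xs (F p hp) t = a.val.1 := by
      have : a.val.1 ∈ Set.range (xs (F p hp)) := by
        show a.val.1 ∈ Set.range ((Ld (F p hp)).orderEmbOfFin rfl)
        rw [range_orderEmbOfFin]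
        exact hx
      exact this
    refine ⟨t, ?_⟩
    rw [← solidAtL_eq_parc p hp t]
    exact left_unique hp ha (solidAtL_spec p _ (hxF p hp t)).1
      (by rw [(solidAtL_spec p _ (hxF p hp t)).2, ht])
  · rintro ⟨t, rfl⟩
    rw [← solidAtL_eq_parc p hp t]
    exact (solidAtL_spec p _ (hxF p hp t)).1

/-- The left inverse property. -/
lemma GF (p : Arc n → M) (hp : InclusionFree p) : Gfun (F p hp) = p := by
  funext a
  by_cases ha : p a = 1
  · rw [Gfun, dif_neg, ha]
    rw [show (¬ ∃ t : Fin (Ld (F p hp)).card, a = parc (F p hp) t) ↔ ¬ (p a ≠ 1) from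
      not_congr (F_arcs p hp a).symm]
    exact fun h => h ha
  · obtain ⟨t, rfl⟩ := (F_arcs p hp a).1 ha
    rw [Gfun_parc (F p hp) t]
    have hii : (⟨((oddIdx (xs (F p hp) t) : Fin (2 * (n + 1))) : ℕ) / 2,
        by have := (oddIdx (xs (F p hp) t)).isLt; omega⟩ : Fin (n + 1)) = xs (F p hp) t := by
      apply Fin.ext
      simp only [oddIdx]
      omega
    rw [F_color_val p hp _ (parc_oddIdx_w (F p hp) t) (by simp [oddIdx])
      (by rw [hii]; exact hxF p hp t)]
    rw [solidAtL_congr p hii _ (hxF p hp t), solidAtL_eq_parc p hp t]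

/-! ### The other round trip -/

lemma LpG (d : ColoredDyck M n) : Lp (Gfun d) = Ld d := by
  ext x
  rw [mem_Lp]
  constructor
  · rintro ⟨a, ha, rfl⟩
    obtain ⟨t, rfl⟩ := (Gfun_solid_iff d a).1 ha
    exact xs_mem d t
  · intro hx
    obtain ⟨t, ht⟩ : ∃ t, xs d t = x := by
      have : x ∈ Set.range (xs d) := by
        show x ∈ Set.range ((Ld d).orderEmbOfFin rfl)
        rw [range_orderEmbOfFin]
        exact hx
      exact this
    exact ⟨parc d t, (Gfun_solid_iff d _).2 ⟨t, rfl⟩, ht⟩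

lemma RpG (d : ColoredDyck M n) : Rp (Gfun d) = Rd d := by
  ext y
  rw [mem_Rp]
  constructor
  · rintro ⟨a, ha, rfl⟩
    obtain ⟨t, rfl⟩ := (Gfun_solid_iff d a).1 ha
    exact ys_mem d t
  · intro hy
    obtain ⟨t, ht⟩ : ∃ t, ys d t = y := by
      have : y ∈ Set.range (ys d) := by
        show y ∈ Set.range ((Rd d).orderEmbOfFin (cardRLd d))
        rw [range_orderEmbOfFin]
        exact hy
      exact this
    exact ⟨parc d t, (Gfun_solid_iff d _).2 ⟨t, rfl⟩, ht⟩

lemma wFG (d : ColoredDyck M n) : (F (Gfun d) (Gfun_inclusionFree d)).w = d.w := by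
  show wordOf (Lp (Gfun d)) (Rp (Gfun d)) = d.w
  rw [LpG, RpG, ← wEq]

lemma ColoredDyck.ext' {d1 d2 : ColoredDyck M n} (hw : d1.w = d2.w)
    (hc : ∀ (i : Fin (2 * (n + 1))) h1 h2 h1' h2',
      (d1.color i h1 h2).val = (d2.color i h1' h2').val) : d1 = d2 := by
  obtain ⟨w1, b1, pc1, c1⟩ := d1
  obtain ⟨w2, b2, pc2, c2⟩ := d2
  dsimp at hw hc
  subst hw
  have hcc : c1 = c2 := by
    funext i h1 h2
    exact Subtype.ext (hc i h1 h2 h1 h2)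
  subst hcc
  rfl

/-- The right inverse property. -/
lemma FG (d : ColoredDyck M n) : F (Gfun d) (Gfun_inclusionFree d) = d := by
  apply ColoredDyck.ext' (wFG d)
  intro i h1 h2 h1' h2'
  have hprf : ∃ a : Arc n, Gfun d a ≠ 1 ∧
      a.val.1 = (⟨(i : ℕ) / 2, by have := i.isLt; omega⟩ : Fin (n + 1)) := by
    have hx : (⟨(i : ℕ) / 2, by have := i.isLt; omega⟩ : Fin (n + 1)) ∈ Lp (Gfun d) := by
      rw [LpG]
      have hio : i = oddIdx ⟨(i : ℕ) / 2, by have := i.isLt; omega⟩ := by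
        apply Fin.ext; simp only [oddIdx]; omega
      simp only [Ld, mem_filter, mem_univ, true_and]
      rw [← hio]
      exact h1'
    exact mem_Lp.1 hx
  rw [F_color_val (Gfun d) (Gfun_inclusionFree d) i h1 h2 hprf]
  obtain ⟨t₀, ht₀⟩ := (Gfun_solid_iff d _).1 (solidAtL_spec (Gfun d) _ hprf).1
  rw [ht₀, Gfun_parc d t₀]
  apply color_congr
  have hxt : xs d t₀ = (⟨(i : ℕ) / 2, by have := i.isLt; omega⟩ : Fin (n + 1)) := by
    have := (solidAtL_spec (Gfun d) _ hprf).2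
    rw [ht₀] at this
    exact this
  apply Fin.ext
  simp only [oddIdx, hxt]
  omega

/-! ### Assembly -/

/-- The bijection between inclusion-free cliques and colored Dyck paths. -/
noncomputable def Phi (M : Type) [MulOneClass M] (n : ℕ) :
    {p : Arc n → M // InclusionFree p} ≃ ColoredDyck M n where
  toFun := fun pp => F pp.val pp.prop
  invFun := fun d => ⟨Gfun d, Gfun_inclusionFree d⟩
  left_inv := fun pp => Subtype.ext (GF pp.val pp.prop)
  right_inv := fun d => FG d

lemma stat (p : Arc n → M) (hp : InclusionFree p) :
    Nat.card {a : Arc n // p a ≠ 1} =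
      Nat.card {i : Fin (2 * (n + 1)) // (F p hp).w i = true ∧ (i : ℕ) % 2 = 1} := by
  have h1 : Nat.card {a : Arc n // p a ≠ 1} = (Sarcs p).card := by
    rw [Nat.card_eq_fintype_card, Fintype.card_subtype]
    rfl
  have h2 : Nat.card {i : Fin (2 * (n + 1)) //
      (F p hp).w i = true ∧ (i : ℕ) % 2 = 1} = (Lp p).card := by
    rw [Nat.card_eq_fintype_card, Fintype.card_subtype]
    exact card_odd_true (Lp p) (Rp p)
  rw [h1, h2, card_Lp hp]

end IFCD

/-- For a finite unitary magma `M` and `n ≥ 2`, the set of inclusion-free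
`M`-cliques of arity `n` is in bijection with the set of Dyck paths of size
`n + 1` whose letters `a` at even positions are colored by non-unit elements of
`M`; moreover the bijection sends cliques with exactly `k` solid arcs to paths
with exactly `k` letters `a` at even positions. -/
theorem inclusion_free_cliques_equiv_colored_dyck (M : Type) [MulOneClass M]
    [Fintype M] (n : ℕ) (hn : 2 ≤ n) :
    ∃ φ : {p : Arc n → M // InclusionFree p} ≃ ColoredDyck M n,
      ∀ p : {p : Arc n → M // InclusionFree p},
        Nat.card {a : Arc n // p.val a ≠ 1} =
          Nat.card {i : Fin (2 * (n + 1)) // (φ p).w i = true ∧ (i : ℕ) % 2 = 1} := by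
  exact ⟨IFCD.Phi M n, fun p => IFCD.stat p.val p.prop⟩
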